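/- There exists a constant C > 0 such that for all x < y in Y with the first return time R constant on [x, y] and such that the iterate T^{R(x)} is differentiable at both x and y with strictly positive derivative, one has |log (T^{R(x)})'(y) − log (T^{R(x)})'(x)| ≤ C |F(y) − F(x)| (bounded distortion of the induced map). -/

import Mathlib

open MeasureTheory Set

/-- The interval map `T` of the example: `T(x) = x (1 + c / |log x|^β)` on `(0, 1/2]`
with `β = 1/γ - 1`, `c = (log 2)^β`, `T(x) = 2x - 1` on `(1/2, 1]`, and `T(0) = 0`. -/
noncomputable def Tmap (γ : ℝ) (x : ℝ) : ℝ :=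
  if x ≤ 0 then 0
  else if x ≤ 1 / 2 then x * (1 + (Real.log 2) ^ (1 / γ - 1) / |Real.log x| ^ (1 / γ - 1))
  else 2 * x - 1

/-- The first return time to the basis `Y = (1/2, 1]`. -/
noncomputable def retTime (γ : ℝ) (x : ℝ) : ℕ :=
  sInf {k : ℕ | 1 ≤ k ∧ (Tmap γ)^[k] x ∈ Set.Ioc (1 / 2 : ℝ) 1}

/-- The induced map `F(x) = T^{R(x)}(x)` on `Y = (1/2, 1]`. -/
noncomputable def indMap (γ : ℝ) (x : ℝ) : ℝ :=
  (Tmap γ)^[retTime γ x] x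

namespace Stmt1Aux
open Real Finset

/-- left branch as a global function -/
noncomputable def Lb (β : ℝ) : ℝ → ℝ := fun u => u * (1 + Real.log 2 ^ β / |Real.log u| ^ β)
noncomputable def Wb : ℝ → ℝ := fun u => -Real.log u
noncomputable def dL (β : ℝ) : ℝ → ℝ := fun u =>
  1 + Real.log 2 ^ β * Wb u ^ (-β) + Real.log 2 ^ β * β * Wb u ^ (-β - 1)
noncomputable def ddL (β : ℝ) : ℝ → ℝ := fun u =>
  Real.log 2 ^ β * β * (Wb u ^ (-β - 1) + (β + 1) * Wb u ^ (-β - 2)) / u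
noncomputable def Ap (β : ℝ) : ℝ := Real.log 2 ^ β * (1 + (β + 1) / Real.log 2)
noncomputable def Ab (β : ℝ) : ℝ := β * Ap β
noncomputable def C0 (β : ℝ) : ℝ := Real.exp (β + 1) * Real.log 2 ^ (-β - 1)
noncomputable def gb (β : ℝ) : ℝ → ℝ := fun u => Ab β * max (C0 β) (Wb u ^ (-β - 1) / u)
noncomputable def Hb (β : ℝ) : ℝ → ℝ := fun u => -(Ap β * Wb u ^ (-β)) - Ab β * C0 β * u
noncomputable def Bb (β : ℝ) : ℝ := Ap β * Real.log 2 ^ (-β) + Ab β * C0 β / 2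
noncomputable def del (β : ℝ) : ℝ := (3 : ℝ) ^ (-β) / 8

lemma l2_pos : (0:ℝ) < Real.log 2 := Real.log_pos one_lt_two

lemma c_pos (β : ℝ) : 0 < Real.log 2 ^ β := Real.rpow_pos_of_pos l2_pos β

lemma w_ge {u : ℝ} (hu : 0 < u) (hu2 : u ≤ 1/2) : Real.log 2 ≤ Wb u := by
  have h := Real.log_le_log hu hu2
  have : Real.log (1/2) = -Real.log 2 := by
    rw [one_div, Real.log_inv]
  rw [this] at h
  simp only [Wb]; linarith

lemma w_pos {u : ℝ} (hu : 0 < u) (hu2 : u ≤ 1/2) : 0 < Wb u := lt_of_lt_of_le l2_pos (w_ge hu hu2)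

lemma w_anti {u v : ℝ} (hu : 0 < u) (huv : u ≤ v) : Wb v ≤ Wb u := by
  simp only [Wb, neg_le_neg_iff]
  exact Real.log_le_log hu huv

/-- rewrite of Lb on (0,1) -/
lemma Lb_eq (β : ℝ) {u : ℝ} (hu : 0 < u) (hu1 : u < 1) :
    Lb β u = u + Real.log 2 ^ β * u * Wb u ^ (-β) := by
  have hlog : Real.log u < 0 := Real.log_neg hu hu1
  have habs : |Real.log u| = Wb u := abs_of_neg hlog
  have hW : (0:ℝ) < Wb u := by simp only [Wb]; linarith
  rw [Lb, habs, Real.rpow_neg hW.le]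
  field_simp

lemma Lb_gt (β : ℝ) {u : ℝ} (hu : 0 < u) (hu2 : u ≤ 1/2) : u < Lb β u := by
  rw [Lb_eq β hu (by linarith)]
  nlinarith [mul_pos (mul_pos (c_pos β) hu) (Real.rpow_pos_of_pos (w_pos hu hu2) (-β))]

lemma Lb_le_two (β : ℝ) (hβ : 0 ≤ β) {u : ℝ} (hu : 0 < u) (hu2 : u ≤ 1/2) :
    Lb β u ≤ 2 * u := by
  rw [Lb_eq β hu (by linarith)]
  have hW := w_pos hu hu2
  have h1 : Real.log 2 ^ β ≤ Wb u ^ β := Real.rpow_le_rpow l2_pos.le (w_ge hu hu2) hβ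
  have h2 : Wb u ^ (-β) = (Wb u ^ β)⁻¹ := Real.rpow_neg hW.le β
  have h3 : (0:ℝ) < Wb u ^ β := Real.rpow_pos_of_pos hW β
  rw [h2]
  have h4 : Real.log 2 ^ β * u * (Wb u ^ β)⁻¹ ≤ u := by
    rw [mul_inv_le_iff₀' h3]
    nlinarith
  linarith


lemma hasDerivAt_Wpow (e : ℝ) {u : ℝ} (hu : 0 < u) (hW : 0 < Wb u) :
    HasDerivAt (fun t => Wb t ^ e) (-e * Wb u ^ (e - 1) / u) u := by
  have hlog : HasDerivAt Wb (-u⁻¹) u := (Real.hasDerivAt_log (ne_of_gt hu)).neg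
  have houter : HasDerivAt (fun z : ℝ => z ^ e) (e * Wb u ^ (e - 1)) (Wb u) :=
    Real.hasDerivAt_rpow_const (Or.inl (ne_of_gt hW))
  have := houter.comp u hlog
  refine this.congr_deriv ?_
  field_simp

lemma hasDerivAt_L (β : ℝ) {u : ℝ} (hu : 0 < u) (hu2 : u ≤ 1/2) :
    HasDerivAt (Lb β) (dL β u) u := by
  have hW := w_pos hu hu2
  set c := Real.log 2 ^ β with hc
  have hin : HasDerivAt (fun t => 1 + c * Wb t ^ (-β)) (c * (-(-β) * Wb u ^ (-β - 1) / u)) u := by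
    have := (hasDerivAt_Wpow (-β) hu hW).const_mul c
    refine ((hasDerivAt_const u (1:ℝ)).add this).congr_deriv ?_
    ring
  have hf : HasDerivAt (fun t => t * (1 + c * Wb t ^ (-β)))
      (1 * (1 + c * Wb u ^ (-β)) + u * (c * (-(-β) * Wb u ^ (-β - 1) / u))) u :=
    (hasDerivAt_id u).mul hin
  have heq : (fun t => t * (1 + c * Wb t ^ (-β))) =ᶠ[nhds u] Lb β := by
    filter_upwards [Ioo_mem_nhds hu (lt_of_le_of_lt hu2 (by norm_num : (1:ℝ)/2 < 1))] with t ht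
    rw [Lb_eq β ht.1 ht.2]
    ring
  have := hf.congr_of_eventuallyEq heq.symm
  refine this.congr_deriv ?_
  rw [dL]
  field_simp
  ring

lemma hasDerivAt_dL (β : ℝ) {u : ℝ} (hu : 0 < u) (hu2 : u ≤ 1/2) :
    HasDerivAt (dL β) (ddL β u) u := by
  have hW := w_pos hu hu2
  set c := Real.log 2 ^ β with hc
  have h1 := (hasDerivAt_Wpow (-β) hu hW).const_mul c
  have h2 := (hasDerivAt_Wpow (-β - 1) hu hW).const_mul (c * β)
  have := ((hasDerivAt_const u (1:ℝ)).add h1).add h2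
  refine this.congr_deriv ?_
  rw [ddL]
  have e1 : -β - 1 - 1 = -β - 2 := by ring
  rw [show (-β) - 1 = -β - 1 from by ring, e1]
  field_simp
  ring

lemma hasDerivAt_H (β : ℝ) {u : ℝ} (hu : 0 < u) (hu2 : u ≤ 1/2) :
    HasDerivAt (Hb β) (-(Ab β * Wb u ^ (-β - 1) / u + Ab β * C0 β)) u := by
  have hW := w_pos hu hu2
  have h1 := ((hasDerivAt_Wpow (-β) hu hW).const_mul (Ap β)).neg
  have h2 := ((hasDerivAt_id u).const_mul (Ab β * C0 β))
  have := h1.sub h2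
  refine this.congr_deriv ?_
  rw [Ab]
  field_simp
  ring


lemma dL_ge_one (β : ℝ) (hβ : 0 ≤ β) {u : ℝ} (hu : 0 < u) (hu2 : u ≤ 1/2) :
    1 ≤ dL β u := by
  have hW := w_pos hu hu2
  have h1 : 0 < Real.log 2 ^ β * Wb u ^ (-β) :=
    mul_pos (c_pos β) (Real.rpow_pos_of_pos hW _)
  have h2 : 0 ≤ Real.log 2 ^ β * β * Wb u ^ (-β - 1) := by
    have := Real.rpow_pos_of_pos hW (-β - 1)
    positivity
  rw [dL]; linarith

lemma dL_mono (β : ℝ) (hβ : 0 ≤ β) {u v : ℝ} (hu : 0 < u) (huv : u ≤ v) (hv2 : v ≤ 1/2) :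
    dL β u ≤ dL β v := by
  have hWv := w_pos (lt_of_lt_of_le hu huv) hv2
  have h1 : Wb u ^ (-β) ≤ Wb v ^ (-β) :=
    Real.rpow_le_rpow_of_nonpos hWv (w_anti hu huv) (by linarith)
  have h2 : Wb u ^ (-β - 1) ≤ Wb v ^ (-β - 1) :=
    Real.rpow_le_rpow_of_nonpos hWv (w_anti hu huv) (by linarith)
  have hc := (c_pos β).le
  rw [dL, dL]
  have hcb : 0 ≤ Real.log 2 ^ β * β := by positivity
  nlinarith

lemma ddL_nonneg (β : ℝ) (hβ : 0 ≤ β) {u : ℝ} (hu : 0 < u) (hu2 : u ≤ 1/2) :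
    0 ≤ ddL β u := by
  have hW := w_pos hu hu2
  have h1 := (Real.rpow_pos_of_pos hW (-β - 1)).le
  have h2 := (Real.rpow_pos_of_pos hW (-β - 2)).le
  have hc := (c_pos β).le
  rw [ddL]
  positivity

lemma Ap_pos (β : ℝ) (hβ : 0 ≤ β) : 0 < Ap β := by
  rw [Ap]
  have := c_pos β
  have := l2_pos
  have : 0 < 1 + (β + 1) / Real.log 2 := by positivity
  positivity

lemma Ab_nonneg (β : ℝ) (hβ : 0 ≤ β) : 0 ≤ Ab β := by
  rw [Ab]; exact mul_nonneg hβ (Ap_pos β hβ).le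

lemma C0_pos (β : ℝ) : 0 < C0 β := by
  rw [C0]
  exact mul_pos (Real.exp_pos _) (Real.rpow_pos_of_pos l2_pos _)

lemma gb_nonneg (β : ℝ) (hβ : 0 ≤ β) {u : ℝ} : 0 ≤ gb β u := by
  rw [gb]
  exact mul_nonneg (Ab_nonneg β hβ) (le_trans (C0_pos β).le (le_max_left _ _))

lemma ddL_le_g (β : ℝ) (hβ : 0 ≤ β) {u : ℝ} (hu : 0 < u) (hu2 : u ≤ 1/2) :
    ddL β u ≤ gb β u := by
  have hW := w_pos hu hu2
  have hwge := w_ge hu hu2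
  -- W^(-β-2)*(β+1) ≤ W^(-β-1)*((β+1)/log 2)
  have key : Wb u ^ (-β - 1) + (β + 1) * Wb u ^ (-β - 2)
      ≤ (1 + (β + 1) / Real.log 2) * Wb u ^ (-β - 1) := by
    have hsplit : Wb u ^ (-β - 2) = Wb u ^ (-β - 1) * (Wb u)⁻¹ := by
      rw [← Real.rpow_neg_one (Wb u), ← Real.rpow_add hW]
      congr 1; ring
    have hinv : (Wb u)⁻¹ ≤ (Real.log 2)⁻¹ := by
      exact inv_anti₀ l2_pos hwge
    have hp := (Real.rpow_pos_of_pos hW (-β - 1)).le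
    rw [hsplit]
    have : (β + 1) * (Wb u ^ (-β - 1) * (Wb u)⁻¹) ≤ (β+1) * (Wb u ^ (-β - 1) * (Real.log 2)⁻¹) := by
      apply mul_le_mul_of_nonneg_left _ (by linarith)
      exact mul_le_mul_of_nonneg_left hinv hp
    rw [div_eq_mul_inv]
    nlinarith
  have hAle : ddL β u ≤ Ab β * (Wb u ^ (-β - 1) / u) := by
    rw [ddL, Ab, Ap, div_le_iff₀ hu]
    calc Real.log 2 ^ β * β * (Wb u ^ (-β - 1) + (β + 1) * Wb u ^ (-β - 2))
        ≤ Real.log 2 ^ β * β * ((1 + (β + 1) / Real.log 2) * Wb u ^ (-β - 1)) := by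
          apply mul_le_mul_of_nonneg_left key (by positivity)
      _ = β * (Real.log 2 ^ β * (1 + (β + 1) / Real.log 2)) * (Wb u ^ (-β - 1) / u) * u := by
          field_simp
  exact le_trans hAle (mul_le_mul_of_nonneg_left (le_max_right _ _) (Ab_nonneg β hβ))

/-- core convexity-type estimate: `t ↦ exp t * t^(-β-1)` is monotone for `t ≥ β+1`. -/
lemma exp_core (β : ℝ) (hβ : 0 ≤ β) {s t : ℝ} (hs : β + 1 ≤ s) (hst : s ≤ t) :
    Real.exp s * s ^ (-β - 1) ≤ Real.exp t * t ^ (-β - 1) := by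
  have hs0 : 0 < s := by linarith
  have ht0 : 0 < t := by linarith
  rw [Real.rpow_def_of_pos hs0, Real.rpow_def_of_pos ht0, ← Real.exp_add, ← Real.exp_add]
  rw [Real.exp_le_exp]
  have hlog : Real.log t - Real.log s ≤ (t - s) / s := by
    rw [← Real.log_div (ne_of_gt ht0) (ne_of_gt hs0)]
    have := Real.log_le_sub_one_of_pos (div_pos ht0 hs0)
    have : Real.log (t/s) ≤ t/s - 1 := this
    rw [div_sub_one (ne_of_gt hs0)] at this
    linarith
  have h2 : (β + 1) * ((t - s)/s) ≤ t - s := by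
    have h : (β + 1)/s ≤ 1 := (div_le_one hs0).2 (by linarith)
    have ht : (0:ℝ) ≤ t - s := by linarith
    calc (β + 1) * ((t - s)/s) = ((β + 1)/s) * (t - s) := by ring
      _ ≤ 1 * (t - s) := mul_le_mul_of_nonneg_right h ht
      _ = t - s := by ring
  nlinarith [mul_le_mul_of_nonneg_left hlog (by linarith : (0:ℝ) ≤ β + 1)]

lemma inv_eq_exp {u : ℝ} (hu : 0 < u) : u⁻¹ = Real.exp (Wb u) := by
  rw [Wb, Real.exp_neg, Real.exp_log hu]

lemma gb_anti (β : ℝ) (hβ : 0 ≤ β) {u v : ℝ} (hu : 0 < u) (huv : u ≤ v) (hv2 : v ≤ 1/2) :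
    gb β v ≤ gb β u := by
  have hu2 : u ≤ 1/2 := le_trans huv hv2
  have hv0 : 0 < v := lt_of_lt_of_le hu huv
  have hWv := w_pos hv0 hv2
  have hWu := w_pos hu hu2
  rw [gb, gb]
  apply mul_le_mul_of_nonneg_left _ (Ab_nonneg β hβ)
  apply max_le (le_max_left _ _)
  have hGv : Wb v ^ (-β - 1) / v = Real.exp (Wb v) * Wb v ^ (-β - 1) := by
    rw [div_eq_mul_inv, inv_eq_exp hv0]; ring
  have hGu : Wb u ^ (-β - 1) / u = Real.exp (Wb u) * Wb u ^ (-β - 1) := by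
    rw [div_eq_mul_inv, inv_eq_exp hu]; ring
  by_cases hcase : Wb v ≤ β + 1
  · apply le_trans _ (le_max_left _ _)
    rw [hGv, C0]
    apply mul_le_mul (Real.exp_le_exp.2 hcase)
      (Real.rpow_le_rpow_of_nonpos l2_pos (w_ge hv0 hv2) (by linarith))
      (Real.rpow_pos_of_pos hWv _).le (Real.exp_pos _).le
  · apply le_trans _ (le_max_right _ _)
    rw [hGv, hGu]
    exact exp_core β hβ (le_of_not_ge hcase) (w_anti hu huv)

lemma Hb_le_zero (β : ℝ) (hβ : 0 ≤ β) {u : ℝ} (hu : 0 < u) (hu2 : u ≤ 1/2) :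
    Hb β u ≤ 0 := by
  have hW := w_pos hu hu2
  have h1 : 0 < Ap β * Wb u ^ (-β) := mul_pos (Ap_pos β hβ) (Real.rpow_pos_of_pos hW _)
  have h2 : 0 ≤ Ab β * C0 β * u := by
    exact mul_nonneg (mul_nonneg (Ab_nonneg β hβ) (C0_pos β).le) hu.le
  rw [Hb]; linarith

lemma Bb_nonneg (β : ℝ) (hβ : 0 ≤ β) : 0 ≤ Bb β := by
  rw [Bb]
  have := Ap_pos β hβ
  have := Ab_nonneg β hβ
  have := (C0_pos β).le
  have := (Real.rpow_pos_of_pos l2_pos (-β)).le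
  positivity

lemma Hb_ge (β : ℝ) (hβ : 0 ≤ β) {u : ℝ} (hu : 0 < u) (hu2 : u ≤ 1/2) :
    -(Bb β) ≤ Hb β u := by
  have hW := w_pos hu hu2
  have h1 : Wb u ^ (-β) ≤ Real.log 2 ^ (-β) :=
    Real.rpow_le_rpow_of_nonpos l2_pos (w_ge hu hu2) (by linarith)
  have h2 : Ap β * Wb u ^ (-β) ≤ Ap β * Real.log 2 ^ (-β) :=
    mul_le_mul_of_nonneg_left h1 (Ap_pos β hβ).le
  have h3 : Ab β * C0 β * u ≤ Ab β * C0 β / 2 := by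
    have : 0 ≤ Ab β * C0 β := mul_nonneg (Ab_nonneg β hβ) (C0_pos β).le
    nlinarith
  rw [Hb, Bb]; linarith

lemma del_pos (β : ℝ) : 0 < del β := by
  rw [del]
  have := Real.rpow_pos_of_pos (by norm_num : (0:ℝ) < 3) (-β)
  positivity


/-- MVT wrapper on subintervals of (0, 1/2]. -/
lemma mvt_aux (f f' : ℝ → ℝ) (hf : ∀ t, 0 < t → t ≤ 1/2 → HasDerivAt f (f' t) t)
    {a b : ℝ} (ha : 0 < a) (hab : a < b) (hb : b ≤ 1/2) :
    ∃ ξ, a < ξ ∧ ξ < b ∧ f b - f a = f' ξ * (b - a) := by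
  have hcont : ContinuousOn f (Icc a b) := fun t ht =>
    (hf t (lt_of_lt_of_le ha ht.1) (le_trans ht.2 hb)).continuousAt.continuousWithinAt
  have hdiff : ∀ t ∈ Ioo a b, HasDerivAt f (f' t) t := fun t ht =>
    hf t (lt_trans ha ht.1) (le_trans ht.2.le hb)
  obtain ⟨ξ, hξ, heq⟩ := exists_hasDerivAt_eq_slope f f' hab hcont hdiff
  refine ⟨ξ, hξ.1, hξ.2, ?_⟩
  rw [heq, div_mul_cancel₀ _ (sub_ne_zero.2 hab.ne')]

lemma mvt_L_lower (β : ℝ) (hβ : 0 ≤ β) {a b : ℝ} (ha : 0 < a) (hab : a < b) (hb : b ≤ 1/2) :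
    dL β a * (b - a) ≤ Lb β b - Lb β a := by
  obtain ⟨ξ, h1, h2, heq⟩ := mvt_aux (Lb β) (dL β) (fun t ht ht2 => hasDerivAt_L β ht ht2) ha hab hb
  rw [heq]
  exact mul_le_mul_of_nonneg_right (dL_mono β hβ ha h1.le (by linarith)) (by linarith)

lemma mvt_L_upper (β : ℝ) (hβ : 0 ≤ β) {a b : ℝ} (ha : 0 < a) (hab : a < b) (hb : b ≤ 1/2) :
    Lb β b - Lb β a ≤ dL β b * (b - a) := by
  obtain ⟨ξ, h1, h2, heq⟩ := mvt_aux (Lb β) (dL β) (fun t ht ht2 => hasDerivAt_L β ht ht2) ha hab hb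
  rw [heq]
  exact mul_le_mul_of_nonneg_right (dL_mono β hβ (lt_trans ha h1) h2.le hb) (by linarith)

lemma mvt_dL (β : ℝ) (hβ : 0 ≤ β) {a b : ℝ} (ha : 0 < a) (hab : a < b) (hb : b ≤ 1/2) :
    dL β b - dL β a ≤ gb β a * (b - a) := by
  obtain ⟨ξ, h1, h2, heq⟩ := mvt_aux (dL β) (ddL β) (fun t ht ht2 => hasDerivAt_dL β ht ht2) ha hab hb
  rw [heq]
  have hg : ddL β ξ ≤ gb β a := by
    apply le_trans (ddL_le_g β hβ (lt_trans ha h1) (by linarith))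
    exact gb_anti β hβ ha h1.le (by linarith)
  exact mul_le_mul_of_nonneg_right hg (by linarith)

lemma mvt_H (β : ℝ) (hβ : 0 ≤ β) {a b : ℝ} (ha : 0 < a) (hab : a < b) (hb : b ≤ 1/2) :
    gb β b * (b - a) ≤ Hb β a - Hb β b := by
  obtain ⟨ξ, h1, h2, heq⟩ := mvt_aux (Hb β)
    (fun t => -(Ab β * Wb t ^ (-β - 1) / t + Ab β * C0 β))
    (fun t ht ht2 => hasDerivAt_H β ht ht2) ha hab hb
  have hξ0 : 0 < ξ := lt_trans ha h1
  have hξ2 : ξ ≤ 1/2 := by linarith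
  have hgξ : gb β b ≤ Ab β * Wb ξ ^ (-β - 1) / ξ + Ab β * C0 β := by
    have h3 : gb β b ≤ gb β ξ := gb_anti β hβ hξ0 h2.le hb
    apply le_trans h3
    rw [gb]
    have hC0 := (C0_pos β).le
    have hG : 0 ≤ Wb ξ ^ (-β - 1) / ξ := by
      have := (Real.rpow_pos_of_pos (w_pos hξ0 hξ2) (-β - 1)).le
      positivity
    have hmax : max (C0 β) (Wb ξ ^ (-β - 1) / ξ) ≤ Wb ξ ^ (-β - 1) / ξ + C0 β := by
      apply max_le <;> linarith
    calc Ab β * max (C0 β) (Wb ξ ^ (-β - 1) / ξ)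
        ≤ Ab β * (Wb ξ ^ (-β - 1) / ξ + C0 β) :=
          mul_le_mul_of_nonneg_left hmax (Ab_nonneg β hβ)
      _ = Ab β * Wb ξ ^ (-β - 1) / ξ + Ab β * C0 β := by ring
  have : Hb β b - Hb β a = -(Ab β * Wb ξ ^ (-β - 1) / ξ + Ab β * C0 β) * (b - a) := heq
  nlinarith [mul_le_mul_of_nonneg_right hgξ (by linarith : (0:ℝ) ≤ b - a)]

lemma log_dL_diff (β : ℝ) (hβ : 0 ≤ β) {u v : ℝ} (hu : 0 < u) (huv : u < v) (hv2 : v ≤ 1/2) :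
    Real.log (dL β v) - Real.log (dL β u) ≤ gb β u * (v - u) := by
  have hA : 1 ≤ dL β u := dL_ge_one β hβ hu (by linarith)
  have hB : dL β u ≤ dL β v := dL_mono β hβ hu huv.le hv2
  have h1 : Real.log (dL β v) - Real.log (dL β u) ≤ dL β v - dL β u := by
    have h0 : (0:ℝ) < dL β u := by linarith
    have h0' : (0:ℝ) < dL β v := by linarith
    have hq : 0 < dL β v / dL β u := by positivity
    have := Real.log_le_sub_one_of_pos hq
    rw [Real.log_div (by linarith) (by linarith)] at this
    have h2 : dL β v / dL β u - 1 ≤ dL β v - dL β u := by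
      rw [div_sub_one (by linarith : dL β u ≠ 0)]
      have : dL β v - dL β u ≤ (dL β v - dL β u) * dL β u := by nlinarith
      rw [div_le_iff₀ h0]
      linarith
    linarith
  exact le_trans h1 (mvt_dL β hβ hu huv hv2)


lemma iter_hasDerivAt (β : ℝ) (hβ : 0 ≤ β) (n : ℕ) (a : ℝ)
    (h : ∀ j < n, (Lb β)^[j] a ∈ Ioc (0:ℝ) (1/2)) :
    HasDerivAt ((Lb β)^[n]) (∏ j ∈ Finset.range n, dL β ((Lb β)^[j] a)) a := by
  induction n with
  | zero => simpa using hasDerivAt_id a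
  | succ n ih =>
    have hmem := h n (Nat.lt_succ_self n)
    have hain : ∀ j < n, (Lb β)^[j] a ∈ Ioc (0:ℝ) (1/2) :=
      fun j hj => h j (hj.trans n.lt_succ_self)
    have houter := hasDerivAt_L β hmem.1 hmem.2
    have hcomp := houter.comp a (ih hain)
    rw [Function.iterate_succ']
    refine hcomp.congr_deriv ?_
    rw [Finset.prod_range_succ]
    ring

lemma del_le_eighth (β : ℝ) (hβ : 0 ≤ β) : del β ≤ 1/8 := by
  rw [del]
  have : (3:ℝ) ^ (-β) ≤ 1 :=
    Real.rpow_le_one_of_one_le_of_nonpos (by norm_num) (by linarith)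
  linarith

lemma step_ge_del (β : ℝ) (hβ : 0 ≤ β) {u : ℝ} (hu : 1/8 < u) (hu2 : u ≤ 1/2) :
    del β ≤ Lb β u - u := by
  have hu0 : (0:ℝ) < u := by linarith
  rw [Lb_eq β hu0 (by linarith)]
  have hW := w_pos hu0 hu2
  have h8pos : (0:ℝ) < Real.log 8 := Real.log_pos (by norm_num)
  have hW8 : Wb u ≤ Real.log 8 := by
    have h := w_anti (by norm_num : (0:ℝ) < 1/8) hu.le
    have : Wb (1/8 : ℝ) = Real.log 8 := by
      rw [Wb, one_div, Real.log_inv]; ring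
    linarith [this ▸ h]
  have hWpow : Real.log 8 ^ (-β) ≤ Wb u ^ (-β) :=
    Real.rpow_le_rpow_of_nonpos hW hW8 (by linarith)
  have hc8 : Real.log 2 ^ β * Real.log 8 ^ (-β) = (3:ℝ) ^ (-β) := by
    have h83 : Real.log 8 = 3 * Real.log 2 := by
      rw [show (8:ℝ) = 2^(3:ℕ) by norm_num, Real.log_pow]
      push_cast; ring
    rw [h83, Real.mul_rpow (by norm_num) l2_pos.le,
      show Real.log 2 ^ β * ((3:ℝ)^(-β) * Real.log 2 ^ (-β)) =
        (3:ℝ)^(-β) * (Real.log 2 ^ β * Real.log 2 ^ (-β)) from by ring,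
      ← Real.rpow_add l2_pos]
    simp
  have hWpos := (Real.rpow_pos_of_pos hW (-β)).le
  have h8p := (Real.rpow_pos_of_pos h8pos (-β)).le
  have hcpos := (c_pos β).le
  have key : (3:ℝ)^(-β) * (1/8) ≤ Real.log 2 ^ β * u * Wb u ^ (-β) := by
    calc (3:ℝ)^(-β) * (1/8) = Real.log 2 ^ β * Real.log 8 ^ (-β) * (1/8) := by rw [hc8]
      _ ≤ Real.log 2 ^ β * Wb u ^ (-β) * u := by
          apply mul_le_mul (mul_le_mul_of_nonneg_left hWpow hcpos) (by linarith) (by norm_num)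
          positivity
      _ = Real.log 2 ^ β * u * Wb u ^ (-β) := by ring
  rw [del]
  linarith

end Stmt1Aux

namespace Stmt1Aux


lemma Tmap_left (γ : ℝ) {u : ℝ} (hu : 0 < u) (hu2 : u ≤ 1/2) :
    Tmap γ u = Lb (1/γ - 1) u := by
  rw [Tmap, if_neg (not_le.2 hu), if_pos hu2]; rfl

lemma Tmap_right (γ : ℝ) {u : ℝ} (hu : 1/2 < u) : Tmap γ u = 2*u - 1 := by
  rw [Tmap, if_neg (not_le.2 (by linarith : (0:ℝ) < u)), if_neg (not_le.2 hu)]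

end Stmt1Aux

set_option maxHeartbeats 1000000 in
open Stmt1Aux Finset in
/-- Bounded distortion of the induced map: there is `C > 0` such that for all `x < y` in `Y`
with the return time constant on `[x, y]`, if `T^{R(x)}` has strictly positive derivatives
`dx` at `x` and `dy` at `y`, then `|log dy - log dx| ≤ C |F(y) - F(x)|`. -/
theorem stmt1 (γ : ℝ) (hγ0 : 0 < γ) (hγ1 : γ ≤ 1) :
    ∃ C : ℝ, 0 < C ∧
      ∀ x y : ℝ, x ∈ Set.Ioc (1 / 2 : ℝ) 1 → y ∈ Set.Ioc (1 / 2 : ℝ) 1 → x < y →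
        (∀ z ∈ Set.Icc x y, retTime γ z = retTime γ x) →
        ∀ dx dy : ℝ,
          HasDerivAt ((Tmap γ)^[retTime γ x]) dx x →
          HasDerivAt ((Tmap γ)^[retTime γ x]) dy y →
          0 < dx → 0 < dy →
          |Real.log dy - Real.log dx| ≤ C * |indMap γ y - indMap γ x| := by
  classical
  have hβ0 : 0 ≤ 1/γ - 1 := by
    have h1 : 1 ≤ 1/γ := by
      rw [le_div_iff₀ hγ0]; linarith
    linarith
  set β := 1/γ - 1 with hβdef
  have hBnn := Bb_nonneg β hβ0
  have hdel := del_pos β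
  have hCnn : 0 ≤ Bb β / del β := div_nonneg hBnn hdel.le
  refine ⟨Bb β / del β + 1, by linarith, ?_⟩
  intro x y hx hy hxy hR dx dy hdx hdy hdxpos hdypos
  have hRHSnn : 0 ≤ (Bb β / del β + 1) * |indMap γ y - indMap γ x| :=
    mul_nonneg (by linarith) (abs_nonneg _)
  by_cases hk0 : retTime γ x = 0
  · rw [hk0] at hdx hdy
    simp only [Function.iterate_zero] at hdx hdy
    have h1 : dx = 1 := hdx.unique (hasDerivAt_id x)
    have h2 : dy = 1 := hdy.unique (hasDerivAt_id y)
    rw [h1, h2, sub_self, abs_zero]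
    exact hRHSnn
  -- nontrivial case
  have hxmem : x ∈ Icc x y := ⟨le_rfl, hxy.le⟩
  have hymem : y ∈ Icc x y := ⟨hxy.le, le_rfl⟩
  have hzfacts : ∀ z ∈ Icc x y,
      ((Tmap γ)^[retTime γ x] z ∈ Ioc (1/2 : ℝ) 1) ∧
      (∀ j, 1 ≤ j → j < retTime γ x → ¬((Tmap γ)^[j] z ∈ Ioc (1/2 : ℝ) 1)) := by
    intro z hz
    have hzr := hR z hz
    have hzne : {k : ℕ | 1 ≤ k ∧ (Tmap γ)^[k] z ∈ Ioc (1/2 : ℝ) 1}.Nonempty := by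
      by_contra h
      rw [Set.not_nonempty_iff_eq_empty] at h
      apply hk0
      rw [← hzr, retTime, h, Nat.sInf_empty]
    constructor
    · have hmem : retTime γ z ∈ {k : ℕ | 1 ≤ k ∧ (Tmap γ)^[k] z ∈ Ioc (1/2 : ℝ) 1} :=
        Nat.sInf_mem hzne
      rw [hzr] at hmem
      exact hmem.2
    · intro j hj1 hjk hmem
      have hle : retTime γ z ≤ j := Nat.sInf_le ⟨hj1, hmem⟩
      rw [hzr] at hle
      omega
  set k := retTime γ x with hkdef
  have hk1 : 1 ≤ k := Nat.one_le_iff_ne_zero.2 hk0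
  set n := k - 1 with hndef
  have hkn : k = n + 1 := by omega
  -- orbit lemma
  have horb : ∀ z ∈ Icc x y, ∀ j ≤ n,
      (Tmap γ)^[j+1] z = (Lb β)^[j] (2*z-1) ∧
      (j < n → (Lb β)^[j] (2*z-1) ∈ Ioc (0:ℝ) (1/2)) := by
    intro z hz
    have hz1 : 1/2 < z := lt_of_lt_of_le hx.1 hz.1
    have hz2 : z ≤ 1 := le_trans hz.2 hy.2
    intro j
    induction j with
    | zero =>
      intro _
      have hT1 : (Tmap γ)^[1] z = 2*z - 1 := by
        rw [Function.iterate_one]; exact Tmap_right γ hz1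
      refine ⟨by simpa using hT1, ?_⟩
      intro h0n
      have hnot := (hzfacts z hz).2 1 le_rfl (by omega)
      rw [hT1] at hnot
      simp only [Function.iterate_zero, id_eq]
      constructor
      · linarith
      · by_contra hgt
        exact hnot ⟨by linarith, by linarith⟩
    | succ j ih =>
      intro hj
      obtain ⟨hiter, hmemf⟩ := ih (by omega)
      have hmem' := hmemf (by omega)
      set t := (Lb β)^[j] (2*z-1) with htdef
      have hstep : (Tmap γ)^[j+1+1] z = (Lb β)^[j+1] (2*z-1) := by
        rw [Function.iterate_succ_apply' (Tmap γ), hiter,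
          Tmap_left γ hmem'.1 hmem'.2, Function.iterate_succ_apply' (Lb β)]
      refine ⟨hstep, ?_⟩
      intro hjn
      rw [Function.iterate_succ_apply' (Lb β)]
      have h1 : (0:ℝ) < Lb β t := lt_trans hmem'.1 (Lb_gt β hmem'.1 hmem'.2)
      have h2 : Lb β t ≤ 1 := le_trans (Lb_le_two β hβ0 hmem'.1 hmem'.2) (by linarith [hmem'.2])
      refine ⟨h1, ?_⟩
      by_contra hgt
      have hnot := (hzfacts z hz).2 (j+1+1) (by omega) (by omega)
      rw [hstep, Function.iterate_succ_apply' (Lb β)] at hnot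
      exact hnot ⟨by linarith, h2⟩
  set p : ℕ → ℝ := fun j => (Lb β)^[j] (2*x-1) with hpdef
  set q : ℕ → ℝ := fun j => (Lb β)^[j] (2*y-1) with hqdef
  have hp : ∀ j < n, p j ∈ Ioc (0:ℝ) (1/2) := fun j hj => (horb x hxmem j hj.le).2 hj
  have hq : ∀ j < n, q j ∈ Ioc (0:ℝ) (1/2) := fun j hj => (horb y hymem j hj.le).2 hj
  have hTk : ∀ z ∈ Icc x y, (Tmap γ)^[k] z = (Lb β)^[n] (2*z-1) := by
    intro z hz
    rw [hkn]
    exact (horb z hz n le_rfl).1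
  -- derivatives of the smooth model
  have hinner : ∀ a : ℝ, HasDerivAt (fun z : ℝ => 2*z-1) 2 a := by
    intro a
    simpa using ((hasDerivAt_id a).const_mul 2).sub_const 1
  have hΦx : HasDerivAt (fun z => (Lb β)^[n] (2*z-1))
      ((∏ j ∈ range n, dL β (p j)) * 2) x := by
    have houter := iter_hasDerivAt β hβ0 n (2*x-1) (fun j hj => hp j hj)
    exact houter.comp x (hinner x)
  have hΦy : HasDerivAt (fun z => (Lb β)^[n] (2*z-1))
      ((∏ j ∈ range n, dL β (q j)) * 2) y := by
    have houter := iter_hasDerivAt β hβ0 n (2*y-1) (fun j hj => hq j hj)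
    exact houter.comp y (hinner y)
  -- identification of dx, dy
  have hU := uniqueDiffOn_Icc hxy
  have hident : ∀ (a : ℝ), a ∈ Icc x y → ∀ d D : ℝ,
      HasDerivAt ((Tmap γ)^[k]) d a →
      HasDerivAt (fun z => (Lb β)^[n] (2*z-1)) D a → d = D := by
    intro a ha d D hd hD
    have h1 : HasDerivWithinAt ((Tmap γ)^[k]) d (Icc x y) a := hd.hasDerivWithinAt
    have h2 : HasDerivWithinAt ((Tmap γ)^[k]) D (Icc x y) a :=
      hD.hasDerivWithinAt.congr (fun z hz => hTk z hz) (hTk a ha)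
    rw [← h1.derivWithin (hU a ha), ← h2.derivWithin (hU a ha)]
  have hdx' : dx = (∏ j ∈ range n, dL β (p j)) * 2 := hident x hxmem dx _ hdx hΦx
  have hdy' : dy = (∏ j ∈ range n, dL β (q j)) * 2 := hident y hymem dy _ hdy hΦy
  -- products
  have hprodP1 : 1 ≤ ∏ j ∈ range n, dL β (p j) := by
    have := Finset.prod_le_prod (f := fun _ : ℕ => (1:ℝ)) (g := fun j => dL β (p j))
      (fun j _ => by norm_num)
      (fun j hj => dL_ge_one β hβ0 (hp j (mem_range.1 hj)).1 (hp j (mem_range.1 hj)).2)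
    simpa using this
  have hprodQ1 : 1 ≤ ∏ j ∈ range n, dL β (q j) := by
    have := Finset.prod_le_prod (f := fun _ : ℕ => (1:ℝ)) (g := fun j => dL β (q j))
      (fun j _ => by norm_num)
      (fun j hj => dL_ge_one β hβ0 (hq j (mem_range.1 hj)).1 (hq j (mem_range.1 hj)).2)
    simpa using this
  -- gap positivity p j < q j
  have hLsucc : ∀ (a : ℝ) (j : ℕ), (Lb β)^[j+1] a = Lb β ((Lb β)^[j] a) :=
    fun a j => Function.iterate_succ_apply' (Lb β) j a
  have hpq : ∀ j ≤ n, p j < q j := by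
    intro j
    induction j with
    | zero => intro _; simp only [hpdef, hqdef, Function.iterate_zero, id_eq]; linarith
    | succ j ih =>
      intro hj
      have hjn : j < n := by omega
      have hihj := ih (by omega)
      have hmv := mvt_L_lower β hβ0 (hp j hjn).1 hihj (hq j hjn).2
      have hd1 := dL_ge_one β hβ0 (hp j hjn).1 (hp j hjn).2
      have e1 : p (j+1) = Lb β (p j) := hLsucc _ j
      have e2 : q (j+1) = Lb β (q j) := hLsucc _ j
      rw [e1, e2]
      have ht := mul_le_mul_of_nonneg_right hd1 (by linarith : (0:ℝ) ≤ q j - p j)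
      linarith
  -- log difference to sum
  have hlogsum : Real.log dy - Real.log dx =
      ∑ j ∈ range n, (Real.log (dL β (q j)) - Real.log (dL β (p j))) := by
    rw [hdx', hdy', Real.log_mul (by linarith) (by norm_num),
      Real.log_mul (by linarith) (by norm_num),
      Real.log_prod (fun j hj => by
        have := dL_ge_one β hβ0 (hq j (mem_range.1 hj)).1 (hq j (mem_range.1 hj)).2
        linarith),
      Real.log_prod (fun j hj => by
        have := dL_ge_one β hβ0 (hp j (mem_range.1 hj)).1 (hp j (mem_range.1 hj)).2
        linarith),
      Finset.sum_sub_distrib]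
    ring
  have hLHS : |Real.log dy - Real.log dx| =
      ∑ j ∈ range n, (Real.log (dL β (q j)) - Real.log (dL β (p j))) := by
    rw [hlogsum, abs_of_nonneg]
    apply Finset.sum_nonneg
    intro j hj
    have hjn := mem_range.1 hj
    have := dL_mono β hβ0 (hp j hjn).1 (hpq j hjn.le).le (hq j hjn).2
    have h1 := dL_ge_one β hβ0 (hp j hjn).1 (hp j hjn).2
    have := Real.log_le_log (by linarith) this
    linarith
  -- F values
  have hFx : indMap γ x = p n := by
    rw [indMap, ← hkdef]
    exact hTk x hxmem
  have hFy : indMap γ y = q n := by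
    rw [indMap, hR y hymem]
    exact hTk y hymem
  have hpnY : p n ∈ Ioc (1/2 : ℝ) 1 := by
    have := (hzfacts x hxmem).1
    rwa [hTk x hxmem] at this
  -- trivial case n = 0
  rcases Nat.eq_zero_or_pos n with hn0 | hnpos
  · rw [hn0] at hdx' hdy'
    simp only [Finset.range_zero, Finset.prod_empty, one_mul] at hdx' hdy'
    rw [hdx', hdy', sub_self, abs_zero]
    exact hRHSnn
    -- main case: n at least 1
  obtain ⟨m, hm⟩ : ∃ m, n = m + 1 := ⟨n - 1, by omega⟩
  set r : ℕ → ℝ := fun j => if j = 0 then p 0 / 2 else p (j - 1) with hrdef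
  have hrfacts : ∀ j < n, 0 < r j ∧ r j < p j ∧ Lb β (r j) ≤ p j := by
    intro j hj
    rcases Nat.eq_zero_or_pos j with h0 | hjpos
    · subst h0
      have h1 := (hp 0 hnpos).1
      have h2 := (hp 0 hnpos).2
      have hr0 : r 0 = p 0 / 2 := by simp [hrdef]
      rw [hr0]
      have hhalf : (0:ℝ) < p 0 / 2 := by linarith
      refine ⟨hhalf, by linarith, ?_⟩
      have := Lb_le_two β hβ0 hhalf (by linarith : p 0 / 2 ≤ 1/2)
      linarith
    · have hj1 : j - 1 < n := by omega
      have e : r j = p (j - 1) := by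
        simp [hrdef, Nat.pos_iff_ne_zero.1 hjpos]
      have hpj : p j = Lb β (p (j-1)) := by
        have h := hLsucc (2*x-1) (j-1)
        rw [show j - 1 + 1 = j from by omega] at h
        exact h
      rw [e, hpj]
      exact ⟨(hp _ hj1).1, Lb_gt β (hp _ hj1).1 (hp _ hj1).2, le_rfl⟩
  have hs : ∀ j < n, 0 < p j - r j := fun j hj => by linarith [(hrfacts j hj).2.1]
  have hstep : ∀ j, j + 1 < n →
      (q j - p j)/(p j - r j) ≤ (q (j+1) - p (j+1))/(p (j+1) - r (j+1)) := by
    intro j hj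
    have hjn : j < n := by omega
    have hd : 0 < q j - p j := by linarith [hpq j hjn.le]
    have hsj := hs j hjn
    have hsj1 := hs (j+1) hj
    have hr1 : r (j+1) = p j := by simp [hrdef]
    have e1 : p (j+1) = Lb β (p j) := hLsucc _ j
    have e2 : q (j+1) = Lb β (q j) := hLsucc _ j
    have hA : dL β (p j) * (q j - p j) ≤ q (j+1) - p (j+1) := by
      rw [e1, e2]
      exact mvt_L_lower β hβ0 (hp j hjn).1 (hpq j hjn.le) (hq j hjn).2
    have hB : p (j+1) - r (j+1) ≤ dL β (p j) * (p j - r j) := by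
      rw [hr1, e1]
      have hup := mvt_L_upper β hβ0 (hrfacts j hjn).1 (hrfacts j hjn).2.1 (hp j hjn).2
      have hle := (hrfacts j hjn).2.2
      linarith
    rw [div_le_div_iff₀ hsj hsj1]
    have t1 := mul_le_mul_of_nonneg_left hB hd.le
    have t2 := mul_le_mul_of_nonneg_right hA hsj.le
    calc (q j - p j) * (p (j+1) - r (j+1))
        ≤ (q j - p j) * (dL β (p j) * (p j - r j)) := t1
      _ = dL β (p j) * (q j - p j) * (p j - r j) := by ring
      _ ≤ (q (j+1) - p (j+1)) * (p j - r j) := t2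
  have hmono : ∀ j i, j ≤ i → i ≤ m →
      (q j - p j)/(p j - r j) ≤ (q i - p i)/(p i - r i) := by
    intro j i hji
    induction i, hji using Nat.le_induction with
    | base => intro _; exact le_rfl
    | succ i hji ih =>
      intro hi
      exact le_trans (ih (by omega)) (hstep i (by omega))
  have hmn : m < n := by omega
  have hpm14 : 1/4 < p m := by
    have e : p n = Lb β (p m) := by rw [hm]; exact hLsucc _ m
    have h1 : 1/2 < Lb β (p m) := by rw [← e]; exact hpnY.1
    have h2 := Lb_le_two β hβ0 (hp m hmn).1 (hp m hmn).2
    linarith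
  have hsm : del β ≤ p m - r m := by
    rcases Nat.eq_zero_or_pos m with h0 | hmpos
    · subst h0
      have hr0 : r 0 = p 0 / 2 := by simp [hrdef]
      rw [hr0]
      have := del_le_eighth β hβ0
      linarith
    · have e : r m = p (m-1) := by simp [hrdef, Nat.pos_iff_ne_zero.1 hmpos]
      have hm1n : m - 1 < n := by omega
      have epm : p m = Lb β (p (m-1)) := by
        have h := hLsucc (2*x-1) (m-1)
        rw [show m - 1 + 1 = m from by omega] at h
        exact h
      have h18 : 1/8 < p (m-1) := by
        have h1 : 1/4 < Lb β (p (m-1)) := by rw [← epm]; exact hpm14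
        have h2 := Lb_le_two β hβ0 (hp _ hm1n).1 (hp _ hm1n).2
        linarith
      rw [e, epm]
      exact step_ge_del β hβ0 h18 (hp _ hm1n).2
  have hD : 0 < q m - p m := by linarith [hpq m hmn.le]
  have hDle : q m - p m ≤ q n - p n := by
    have e1 : p n = Lb β (p m) := by rw [hm]; exact hLsucc _ m
    have e2 : q n = Lb β (q m) := by rw [hm]; exact hLsucc _ m
    have hmv := mvt_L_lower β hβ0 (hp m hmn).1 (hpq m hmn.le) (hq m hmn).2
    have hd1 := dL_ge_one β hβ0 (hp m hmn).1 (hp m hmn).2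
    rw [e1, e2]
    have ht := mul_le_mul_of_nonneg_right hd1 hD.le
    linarith
  have hgap : ∀ j < n, q j - p j ≤ (q m - p m) * (p j - r j) / del β := by
    intro j hj
    have hjm : j ≤ m := by omega
    have h1 := hmono j m hjm le_rfl
    rw [div_le_div_iff₀ (hs j hj) (hs m hmn)] at h1
    have h2 : (q j - p j) * del β ≤ (q j - p j) * (p m - r m) :=
      mul_le_mul_of_nonneg_left hsm (by linarith [hpq j hj.le])
    rw [le_div_iff₀ hdel]
    linarith
  have hterm : ∀ j < n, Real.log (dL β (q j)) - Real.log (dL β (p j)) ≤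
      ((q m - p m) / del β) * (gb β (p j) * (p j - r j)) := by
    intro j hj
    have h1 := log_dL_diff β hβ0 (hp j hj).1 (hpq j hj.le) (hq j hj).2
    have h2 := hgap j hj
    have hgnn : 0 ≤ gb β (p j) := gb_nonneg β hβ0
    calc Real.log (dL β (q j)) - Real.log (dL β (p j))
        ≤ gb β (p j) * (q j - p j) := h1
      _ ≤ gb β (p j) * ((q m - p m) * (p j - r j) / del β) :=
          mul_le_mul_of_nonneg_left h2 hgnn
      _ = ((q m - p m)/del β) * (gb β (p j) * (p j - r j)) := by ring
  have hHsum : ∑ j ∈ range n, (gb β (p j) * (p j - r j)) ≤ Bb β := by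
    have hHterm : ∀ j < n, gb β (p j) * (p j - r j) ≤ Hb β (r j) - Hb β (r (j+1)) := by
      intro j hj
      have hr1 : r (j+1) = p j := by simp [hrdef]
      rw [hr1]
      exact mvt_H β hβ0 (hrfacts j hj).1 (hrfacts j hj).2.1 (hp j hj).2
    calc ∑ j ∈ range n, (gb β (p j) * (p j - r j))
        ≤ ∑ j ∈ range n, (Hb β (r j) - Hb β (r (j+1))) :=
          Finset.sum_le_sum (fun j hj => hHterm j (mem_range.1 hj))
      _ = Hb β (r 0) - Hb β (r n) := Finset.sum_range_sub' (fun j => Hb β (r j)) n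
      _ ≤ Bb β := by
          have hr0 : r 0 = p 0 / 2 := by simp [hrdef]
          have h1 := (hp 0 hnpos).1
          have h2 := (hp 0 hnpos).2
          have hH0 : Hb β (r 0) ≤ 0 := by
            rw [hr0]
            exact Hb_le_zero β hβ0 (by linarith) (by linarith)
          have hrn : r n = p m := by
            rw [hm]
            simp [hrdef]
          have hHn : -(Bb β) ≤ Hb β (r n) := by
            rw [hrn]
            exact Hb_ge β hβ0 (hp m hmn).1 (hp m hmn).2
          linarith
  rw [hLHS, hFy, hFx]
  have habs : |q n - p n| = q n - p n := abs_of_pos (by linarith)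
  calc ∑ j ∈ range n, (Real.log (dL β (q j)) - Real.log (dL β (p j)))
      ≤ ∑ j ∈ range n, ((q m - p m)/del β) * (gb β (p j) * (p j - r j)) :=
        Finset.sum_le_sum (fun j hj => hterm j (mem_range.1 hj))
    _ = ((q m - p m)/del β) * ∑ j ∈ range n, (gb β (p j) * (p j - r j)) := by
        rw [Finset.mul_sum]
    _ ≤ ((q m - p m)/del β) * Bb β :=
        mul_le_mul_of_nonneg_left hHsum (div_nonneg hD.le hdel.le)
    _ = (Bb β / del β) * (q m - p m) := by ring
    _ ≤ (Bb β / del β + 1) * (q n - p n) := by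
        have t1 := mul_le_mul_of_nonneg_left hDle hCnn
        have t2 : 0 < q n - p n := lt_of_lt_of_le hD hDle
        linarith
    _ = (Bb β / del β + 1) * |q n - p n| := by rw [habs]
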